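/- Let Ā ∈ ℂ^{n×n}, F̄ ∈ ℂ^{n×m}, Ω̄ ∈ ℂ^{m×m}, C̄ ∈ ℂ^{p×n}, H̄ ∈ ℂ^{q×n} be complex matrices, and define 𝒜 = [[Ā, −F̄],[0, Ω̄]] and 𝒞 = [[C̄, 0],[H̄, 0]]. Assume: (i) the pair (Ā, [C̄; H̄]) is detectable, where [C̄; H̄] denotes C̄ stacked on top of H̄; (ii) the pair (Ω̄, F̄) is detectable; and (iii) for every s ∈ ℂ with Re(s) ≥ 0 and all z ∈ ℂⁿ, δ ∈ ℂᵐ with Ω̄δ = sδ, C̄z = 0, H̄z = 0 and Āz − sz = F̄δ, one has F̄δ = 0. Then the pair (𝒜, 𝒞) is detectable. -/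
import Mathlib


open Matrix

/-- PBH detectability of a matrix pair. -/
def Detectable {k r : Type} [Fintype k] (M : Matrix k k ℂ) (C : Matrix r k ℂ) : Prop :=
  ∀ s : ℂ, 0 ≤ s.re → ∀ x : k → ℂ, M.mulVec x = s • x → C.mulVec x = 0 → x = 0

theorem stmt_1 {n m p q : ℕ}
    (Abar : Matrix (Fin n) (Fin n) ℂ) (Fbar : Matrix (Fin n) (Fin m) ℂ)
    (Ωbar : Matrix (Fin m) (Fin m) ℂ) (Cbar : Matrix (Fin p) (Fin n) ℂ)
    (Hbar : Matrix (Fin q) (Fin n) ℂ)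
    (h1 : Detectable Abar (Matrix.fromRows Cbar Hbar))
    (h2 : Detectable Ωbar Fbar)
    (h3 : ∀ s : ℂ, 0 ≤ s.re → ∀ (z : Fin n → ℂ) (δ : Fin m → ℂ),
        Ωbar.mulVec δ = s • δ → Cbar.mulVec z = 0 → Hbar.mulVec z = 0 →
        Abar.mulVec z - s • z = Fbar.mulVec δ → Fbar.mulVec δ = 0) :
    Detectable (Matrix.fromBlocks Abar (-Fbar) 0 Ωbar) (Matrix.fromBlocks Cbar 0 Hbar 0) := by
  intro s hs x hM hC
  set z : Fin n → ℂ := x ∘ Sum.inl with hz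
  set δ : Fin m → ℂ := x ∘ Sum.inr with hδ
  rw [fromBlocks_mulVec] at hM hC
  have hM1 : Abar.mulVec z + (-Fbar).mulVec δ = s • z := funext fun i => congrFun hM (Sum.inl i)
  have hM2 : (0 : Matrix (Fin m) (Fin n) ℂ).mulVec z + Ωbar.mulVec δ = s • δ :=
    funext fun i => congrFun hM (Sum.inr i)
  have hC1 : Cbar.mulVec z + (0 : Matrix (Fin p) (Fin m) ℂ).mulVec δ = 0 :=
    funext fun i => congrFun hC (Sum.inl i)
  have hC2 : Hbar.mulVec z + (0 : Matrix (Fin q) (Fin m) ℂ).mulVec δ = 0 :=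
    funext fun i => congrFun hC (Sum.inr i)
  simp only [zero_mulVec, zero_add, add_zero, neg_mulVec] at hM1 hM2 hC1 hC2
  have hdiff : Abar.mulVec z - s • z = Fbar.mulVec δ := by
    rw [← hM1]; abel
  have hF : Fbar.mulVec δ = 0 := h3 s hs z δ hM2 hC1 hC2 hdiff
  have hδ0 : δ = 0 := h2 s hs δ hM2 hF
  have hz0 : z = 0 := by
    refine h1 s hs z ?_ ?_
    · rw [← sub_eq_zero, hdiff, hF]
    · rw [fromRows_mulVec, hC1, hC2]; ext (i | i) <;> rfl
  ext (i | i)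
  · exact congrFun hz0 i
  · exact congrFun hδ0 i
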